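/- Let l > 1/3. There exists a constant C > 0, depending only on l, such that for all real coefficients a₀, a₁, a₂: ∫_ℝ dx / ⟨x³ + a₂x² + a₁x + a₀⟩^l ≤ C. In particular the bound is uniform in the coefficients a₀, a₁, a₂. -/

import Mathlib

open MeasureTheory Polynomial

lemma cubic_roots_bound (a₀ a₁ a₂ : ℝ) : ∃ b₁ b₂ b₃ : ℝ, ∀ x : ℝ,
    |x - b₁| * |x - b₂| * |x - b₃| ≤ |x ^ 3 + a₂ * x ^ 2 + a₁ * x + a₀| := by
  set Q : Polynomial ℂ := X ^ 3 + C (a₂ : ℂ) * X ^ 2 + C (a₁ : ℂ) * X + C (a₀ : ℂ) with hQ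
  have hmon : Q.Monic := by
    unfold Q
    monicity!
  have hdeg : Q.natDegree = 3 := by
    unfold Q
    compute_degree!
  have hsplits : Splits Q := IsAlgClosed.splits Q
  have hcard : Q.roots.card = 3 := by
    rw [(splits_iff_card_roots).mp hsplits, hdeg]
  obtain ⟨z₁, z₂, z₃, hz⟩ := Multiset.card_eq_three.mp hcard
  have hfac : Q = (X - C z₁) * ((X - C z₂) * (X - C z₃)) := by
    conv_lhs => rw [hsplits.eq_prod_roots_of_monic hmon, hz]
    simp [mul_assoc]
  refine ⟨z₁.re, z₂.re, z₃.re, fun x => ?_⟩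
  have heval : ((x : ℂ) ^ 3 + a₂ * x ^ 2 + a₁ * x + a₀)
      = ((x : ℂ) - z₁) * (((x : ℂ) - z₂) * ((x : ℂ) - z₃)) := by
    have := congrArg (eval (x : ℂ)) hfac
    simpa [hQ] using this
  have habs : |x ^ 3 + a₂ * x ^ 2 + a₁ * x + a₀|
      = ‖(x : ℂ) - z₁‖ * (‖(x : ℂ) - z₂‖
        * ‖(x : ℂ) - z₃‖) := by
    rw [← Real.norm_eq_abs, ← Complex.norm_real]
    push_cast
    rw [heval, norm_mul, norm_mul]
  rw [habs, ← mul_assoc]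
  have key : ∀ z : ℂ, |x - z.re| ≤ ‖(x : ℂ) - z‖ := fun z => by
    have h := Complex.abs_re_le_norm ((x : ℂ) - z)
    simpa using h
  gcongr <;> first | positivity | exact key _

lemma pointwise_aux (l : ℝ) (hl0 : 0 < l) (m P : ℝ) (hm : 0 ≤ m) (hP : m ^ 3 ≤ |P|) :
    1 / (1 + |P|) ^ l ≤ 4 ^ l * (1 + m) ^ (-(3 * l)) := by
  have h1 : (0 : ℝ) < 1 + m := by linarith
  have h2 : (0 : ℝ) < 1 + m ^ 3 := by positivity
  have h3 : (1 + m) ^ (3 : ℕ) ≤ 4 * (1 + m ^ 3) := by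
    nlinarith [sq_nonneg (m - 1), sq_nonneg m, sq_nonneg (m + 1)]
  have h4 : (1 + m) ^ (3 * l) ≤ 4 ^ l * (1 + m ^ 3) ^ l := by
    have e : (1 + m) ^ (3 * l) = ((1 + m) ^ (3 : ℕ)) ^ l := by
      rw [← Real.rpow_natCast (1 + m) 3, ← Real.rpow_mul h1.le]
      norm_num
    rw [e, ← Real.mul_rpow (by norm_num) h2.le]
    exact Real.rpow_le_rpow (by positivity) h3 hl0.le
  have h5 : (1 + m ^ 3) ^ l ≤ (1 + |P|) ^ l :=
    Real.rpow_le_rpow h2.le (by linarith) hl0.le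
  have hpos : (0 : ℝ) < (1 + m) ^ (3 * l) := Real.rpow_pos_of_pos h1 _
  have hpos2 : (0 : ℝ) < (1 + |P|) ^ l := Real.rpow_pos_of_pos (by positivity) _
  rw [Real.rpow_neg h1.le, mul_comm, inv_mul_eq_div, div_le_div_iff₀ hpos2 hpos]
  nlinarith [h4, h5, Real.rpow_nonneg (show (0:ℝ) ≤ 4 by norm_num) l]

theorem stmt_3 (l : ℝ) (hl : 1 / 3 < l) :
    ∃ C : ℝ, 0 < C ∧ ∀ a₀ a₁ a₂ : ℝ,
      (∫ x : ℝ, 1 / (1 + |x ^ 3 + a₂ * x ^ 2 + a₁ * x + a₀|) ^ l) ≤ C := by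
  have hl0 : 0 < l := lt_trans (by norm_num) hl
  have h3l : (1 : ℝ) < 3 * l := by linarith
  have hbase : Integrable (fun x : ℝ => (1 + |x|) ^ (-(3 * l))) := by
    have := integrable_one_add_norm (E := ℝ) (μ := volume) (r := 3 * l) (by simpa using h3l)
    simpa [Real.norm_eq_abs] using this
  set J := ∫ x : ℝ, (1 + |x|) ^ (-(3 * l)) with hJ
  have hJ0 : 0 ≤ J := integral_nonneg fun x => Real.rpow_nonneg (by positivity) _
  refine ⟨3 * 4 ^ l * J + 1, by positivity, fun a₀ a₁ a₂ => ?_⟩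
  obtain ⟨b₁, b₂, b₃, hb⟩ := cubic_roots_bound a₀ a₁ a₂
  set g : ℝ → ℝ → ℝ := fun b x => (4 : ℝ) ^ l * (1 + |x - b|) ^ (-(3 * l)) with hg
  have hgint : ∀ b, Integrable (g b) := fun b =>
    (hbase.comp_sub_right b).const_mul _
  have hgval : ∀ b, ∫ x, g b x = 4 ^ l * J := fun b => by
    rw [show g b = fun x => (4:ℝ) ^ l * (1 + |x - b|) ^ (-(3 * l)) from rfl,
      MeasureTheory.integral_const_mul]
    congr 1
    exact integral_sub_right_eq_self (fun x : ℝ => (1 + |x|) ^ (-(3 * l))) b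
  have hgnn : ∀ b x, 0 ≤ g b x := fun b x => by
    apply mul_nonneg (by positivity) (Real.rpow_nonneg (by positivity) _)
  have hpt : ∀ x : ℝ, 1 / (1 + |x ^ 3 + a₂ * x ^ 2 + a₁ * x + a₀|) ^ l
      ≤ g b₁ x + (g b₂ x + g b₃ x) := by
    intro x
    set m : ℝ := min (min |x - b₁| |x - b₂|) |x - b₃| with hm
    have hm0 : 0 ≤ m := le_min (le_min (abs_nonneg _) (abs_nonneg _)) (abs_nonneg _)
    have hmcube : m ^ 3 ≤ |x ^ 3 + a₂ * x ^ 2 + a₁ * x + a₀| := by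
      refine le_trans ?_ (hb x)
      have h1 : m ≤ |x - b₁| := le_trans (min_le_left _ _) (min_le_left _ _)
      have h2 : m ≤ |x - b₂| := le_trans (min_le_left _ _) (min_le_right _ _)
      have h3 : m ≤ |x - b₃| := min_le_right _ _
      calc m ^ 3 = m * m * m := by ring
        _ ≤ |x - b₁| * |x - b₂| * |x - b₃| := by gcongr
    have hmain := pointwise_aux l hl0 m _ hm0 hmcube
    refine le_trans hmain ?_
    have hcases : m = |x - b₁| ∨ m = |x - b₂| ∨ m = |x - b₃| := by
      rcases min_cases (min |x - b₁| |x - b₂|) |x - b₃| with ⟨h, -⟩ | ⟨h, -⟩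
      · rcases min_cases |x - b₁| |x - b₂| with ⟨h', -⟩ | ⟨h', -⟩
        · exact Or.inl (h.trans h')
        · exact Or.inr (Or.inl (h.trans h'))
      · exact Or.inr (Or.inr h)
    rcases hcases with h | h | h <;> rw [h]
    · have := hgnn b₂ x; have := hgnn b₃ x
      have e : g b₁ x = 4 ^ l * (1 + |x - b₁|) ^ (-(3 * l)) := rfl
      linarith [e.ge]
    · have := hgnn b₁ x; have := hgnn b₃ x
      have e : g b₂ x = 4 ^ l * (1 + |x - b₂|) ^ (-(3 * l)) := rfl
      linarith [e.ge]
    · have := hgnn b₁ x; have := hgnn b₂ x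
      have e : g b₃ x = 4 ^ l * (1 + |x - b₃|) ^ (-(3 * l)) := rfl
      linarith [e.ge]
  have hsumint : Integrable (fun x => g b₁ x + (g b₂ x + g b₃ x)) :=
    (hgint b₁).add ((hgint b₂).add (hgint b₃))
  have hcont : Continuous fun x : ℝ => 1 / (1 + |x ^ 3 + a₂ * x ^ 2 + a₁ * x + a₀|) ^ l := by
    have hc : Continuous fun x : ℝ => 1 + |x ^ 3 + a₂ * x ^ 2 + a₁ * x + a₀| := by
      fun_prop
    apply Continuous.div continuous_const
    · exact hc.rpow_const fun x => Or.inl (by positivity)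
    · intro x
      positivity
  have hhint : Integrable (fun x : ℝ => 1 / (1 + |x ^ 3 + a₂ * x ^ 2 + a₁ * x + a₀|) ^ l) := by
    refine hsumint.mono' hcont.aestronglyMeasurable ?_
    filter_upwards with x
    rw [Real.norm_eq_abs, abs_of_nonneg (by positivity)]
    exact hpt x
  calc (∫ x : ℝ, 1 / (1 + |x ^ 3 + a₂ * x ^ 2 + a₁ * x + a₀|) ^ l)
      ≤ ∫ x, (g b₁ x + (g b₂ x + g b₃ x)) := integral_mono hhint hsumint hpt
    _ = 4 ^ l * J + (4 ^ l * J + 4 ^ l * J) := by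
        have i2 : Integrable (fun x => g b₂ x) volume := hgint b₂
        have i3 : Integrable (fun x => g b₃ x) volume := hgint b₃
        have i23 : Integrable (fun x => g b₂ x + g b₃ x) volume := i2.add i3
        have i1 : Integrable (fun x => g b₁ x) volume := hgint b₁
        rw [integral_add i1 i23, integral_add i2 i3, hgval, hgval, hgval]
    _ ≤ 3 * 4 ^ l * J + 1 := by nlinarith
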